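/- Mann's theorem: Let D be a (v,k,λ)-BIBD with b blocks and replication number r, with r > λ. If s blocks of D are identical (i.e., some block occurs with multiplicity s), then b/v ≥ s (equivalently r/k ≥ s). -/

import Mathlib

/-- Mann's theorem: in a (v,k,λ)-BIBD with r > λ, if some block occurs with
    multiplicity s then b/v ≥ s, i.e. s·v ≤ b. -/
theorem mann_theorem (v b r k lam s : ℕ) (hv : 1 ≤ v) (hrl : lam < r)
    (B : Fin b → Finset (Fin v))
    (hcard : ∀ i, (B i).card = k)
    (hrep : ∀ p, (Finset.univ.filter (fun i => p ∈ B i)).card = r)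
    (hpair : ∀ p q : Fin v, p ≠ q →
      (Finset.univ.filter (fun i => p ∈ B i ∧ q ∈ B i)).card = lam)
    (S : Finset (Fin b)) (hS : S.card = s)
    (hident : ∀ i ∈ S, ∀ j ∈ S, B i = B j) :
    s * v ≤ b := by
  -- trivial case s = 0
  rcases Nat.eq_zero_or_pos s with hs0 | hs0
  · simp [hs0]
  obtain ⟨i₀, hi₀⟩ := Finset.card_pos.mp (by rw [hS]; exact hs0)
  set A := B i₀ with hA
  have p₀ : Fin v := ⟨0, hv⟩
  -- basic counting: b * k = v * r
  have hbk : b * k = v * r := by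
    have h : ∑ i : Fin b, ∑ p : Fin v, (if p ∈ B i then 1 else 0) =
        ∑ p : Fin v, ∑ i : Fin b, (if p ∈ B i then 1 else 0) := Finset.sum_comm
    simp only [Finset.sum_boole, Nat.cast_id, Finset.sum_ite_mem, Finset.univ_inter,
      Finset.sum_const, smul_eq_mul, mul_one, hrep] at h
    simpa [hcard, Finset.card_univ, mul_comm] using h
  -- basic counting: r * (k-1) = lam * (v-1)
  have hrk : r * (k - 1) = lam * (v - 1) := by
    have h : ∑ q ∈ Finset.univ.erase p₀, ∑ i : Fin b, (if p₀ ∈ B i ∧ q ∈ B i then 1 else 0)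
        = ∑ i : Fin b, ∑ q ∈ Finset.univ.erase p₀, (if p₀ ∈ B i ∧ q ∈ B i then 1 else 0) :=
      Finset.sum_comm
    have hL : ∑ q ∈ Finset.univ.erase p₀, ∑ i : Fin b, (if p₀ ∈ B i ∧ q ∈ B i then 1 else 0)
        = (v - 1) * lam := by
      have h1 : ∀ q ∈ Finset.univ.erase p₀,
          ∑ i : Fin b, (if p₀ ∈ B i ∧ q ∈ B i then 1 else 0) = lam := by
        intro q hq
        rw [Finset.sum_boole]
        simpa using hpair p₀ q (Ne.symm (Finset.ne_of_mem_erase hq))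
      rw [Finset.sum_congr rfl h1, Finset.sum_const, smul_eq_mul,
        Finset.card_erase_of_mem (Finset.mem_univ _), Finset.card_univ, Fintype.card_fin]
    have hR : ∑ i : Fin b, ∑ q ∈ Finset.univ.erase p₀, (if p₀ ∈ B i ∧ q ∈ B i then 1 else 0)
        = r * (k - 1) := by
      have h1 : ∀ i ∈ (Finset.univ : Finset (Fin b)),
          ∑ q ∈ Finset.univ.erase p₀, (if p₀ ∈ B i ∧ q ∈ B i then 1 else 0)
          = (if p₀ ∈ B i then k - 1 else 0) := by
        intro i _
        by_cases hp : p₀ ∈ B i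
        · simp only [hp, true_and, if_true, Finset.sum_ite_mem]
          rw [Finset.sum_const, smul_eq_mul, mul_one]
          have he : (Finset.univ.erase p₀) ∩ B i = (B i).erase p₀ := by
            ext x; simp [Finset.mem_erase, and_comm]
          rw [he, Finset.card_erase_of_mem hp, hcard]
        · simp [hp]
      rw [Finset.sum_congr rfl h1, Finset.sum_ite, Finset.sum_const, Finset.sum_const,
        smul_eq_mul, smul_eq_mul, mul_zero, add_zero, hrep]
    rw [hL, hR] at h
    rw [← h, mul_comm]
  -- basic bounds
  have hsb : s ≤ b := by
    have := Finset.card_le_univ S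
    simpa [hS, Finset.card_univ] using this
  have hrb : r ≤ b := by
    have := Finset.card_le_univ (Finset.univ.filter (fun i => p₀ ∈ B i))
    simpa [hrep, Finset.card_univ] using this
  have hr1 : 1 ≤ r := by omega
  have hk1 : 1 ≤ k := by
    by_contra hk
    have hk0 : k = 0 := by omega
    have := hrep p₀
    have hempty : Finset.univ.filter (fun i => p₀ ∈ B i) = ∅ := by
      apply Finset.filter_false_of_mem
      intro i _
      intro hmem
      have := hcard i
      rw [hk0, Finset.card_eq_zero] at this
      simp [this] at hmem
    rw [hempty] at this
    simp at this
    omega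
  have hkv' : k ≤ v := by
    have := Finset.card_le_univ A
    simpa [hA, hcard i₀, Finset.card_univ] using this
  -- case v = 1
  rcases Nat.lt_or_ge v 2 with hv1 | hv2
  · have : v = 1 := by omega
    subst this
    simpa using hsb
  -- now v ≥ 2; get k < v
  have hkv : k < v := by
    rcases lt_or_eq_of_le hkv' with h | h
    · exact h
    · exfalso
      rw [h] at hrk
      have : r = lam := Nat.eq_of_mul_eq_mul_right (by omega) hrk
      omega
  -- get r < b
  have hrb' : r < b := by
    rcases lt_or_eq_of_le hrb with h | h
    · exact h
    · exfalso
      have hall : ∀ p : Fin v, ∀ i : Fin b, p ∈ B i := by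
        intro p i
        have hc := hrep p
        rw [h] at hc
        have huniv : Finset.univ.filter (fun i => p ∈ B i) = Finset.univ :=
          Finset.eq_univ_of_card _ (by simpa using hc)
        have hmem : i ∈ Finset.univ.filter (fun i => p ∈ B i) := by
          rw [huniv]; exact Finset.mem_univ i
        exact (Finset.mem_filter.mp hmem).2
      have : A = Finset.univ := Finset.eq_univ_iff_forall.mpr (fun p => hall p i₀)
      have hcv := hcard i₀
      rw [← hA, this, Finset.card_univ, Fintype.card_fin] at hcv
      omega
  -- cast to ℤ
  have hbkZ : (b : ℤ) * k = v * r := by exact_mod_cast hbk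
  have hlamZ : (r : ℤ) * ((k : ℤ) - 1) = (lam : ℤ) * ((v : ℤ) - 1) := by
    have : (r : ℤ) * ((k : ℤ) - 1) = ((r * (k - 1) : ℕ) : ℤ) := by
      push_cast [Nat.cast_sub hk1]; ring
    rw [this, hrk]
    push_cast [Nat.cast_sub hv]; ring
  -- indicator vectors
  set χ : Fin v → ℤ := fun x => if x ∈ A then 1 else 0 with hχ
  set z : Fin v → ℤ := fun x => (b : ℤ) * χ x - r with hz
  set t : Fin b → ℤ := fun j => ∑ x ∈ B j, z x with ht
  set w : Fin b → ℤ := fun j => if j ∈ S then (b : ℤ) - s else -(s : ℤ) with hw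
  -- sums of χ
  have hχsum : ∑ x : Fin v, χ x = (k : ℤ) := by
    rw [hχ]
    rw [Finset.sum_ite_mem, Finset.univ_inter, Finset.sum_const, nsmul_eq_mul, mul_one,
      hcard i₀]
  have hzsum : ∑ x : Fin v, z x = 0 := by
    rw [hz]
    rw [Finset.sum_sub_distrib, ← Finset.mul_sum, hχsum, Finset.sum_const, Finset.card_univ,
      Fintype.card_fin, nsmul_eq_mul]
    linarith [hbkZ]
  have hz2 : ∑ x : Fin v, (z x) ^ 2 = (k : ℤ) * b * ((b : ℤ) - r) := by
    have hpt : ∀ x, (z x) ^ 2 = ((b : ℤ) ^ 2 - 2 * b * r) * χ x + (r : ℤ) ^ 2 := by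
      intro x
      rw [hz, hχ]
      dsimp only
      split_ifs <;> ring
    rw [Finset.sum_congr rfl (fun x _ => hpt x), Finset.sum_add_distrib, ← Finset.mul_sum,
      hχsum, Finset.sum_const, Finset.card_univ, Fintype.card_fin, nsmul_eq_mul]
    linear_combination (-(r : ℤ)) * hbkZ
  -- counting sums over blocks
  have hcnt1 : ∀ x : Fin v, ∑ j : Fin b, (if x ∈ B j then (1 : ℤ) else 0) = (r : ℤ) := by
    intro x
    rw [Finset.sum_boole]
    exact_mod_cast hrep x
  have hcnt : ∀ x y : Fin v, ∑ j : Fin b, (if x ∈ B j then (1 : ℤ) else 0) *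
      (if y ∈ B j then (1 : ℤ) else 0) = if x = y then (r : ℤ) else (lam : ℤ) := by
    intro x y
    have hp : ∀ j, (if x ∈ B j then (1 : ℤ) else 0) * (if y ∈ B j then (1 : ℤ) else 0)
        = if x ∈ B j ∧ y ∈ B j then (1 : ℤ) else 0 := by
      intro j; split_ifs with h1 h2 h3 h4 <;> simp_all
    rw [Finset.sum_congr rfl (fun j _ => hp j), Finset.sum_boole]
    by_cases hxy : x = y
    · subst hxy
      rw [if_pos rfl]
      have : (Finset.univ.filter (fun i => x ∈ B i ∧ x ∈ B i)) =
          (Finset.univ.filter (fun i => x ∈ B i)) := by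
        apply Finset.filter_congr; intro i _; simp
      rw [this]
      exact_mod_cast hrep x
    · rw [if_neg hxy]
      exact_mod_cast hpair x y hxy
  -- expand t as a full sum
  have htfull : ∀ j, t j = ∑ x : Fin v, (if x ∈ B j then (1 : ℤ) else 0) * z x := by
    intro j
    rw [ht]
    dsimp only
    calc ∑ x ∈ B j, z x = ∑ x ∈ Finset.univ ∩ B j, z x := by rw [Finset.univ_inter]
      _ = ∑ x : Fin v, (if x ∈ B j then z x else 0) := (Finset.sum_ite_mem _ _ _).symm
      _ = ∑ x : Fin v, (if x ∈ B j then (1 : ℤ) else 0) * z x := by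
          refine Finset.sum_congr rfl fun x _ => ?_
          split_ifs <;> ring
  -- key identity: sum of t^2 = (r-lam) * sum of z^2
  have KI : ∑ j : Fin b, (t j) ^ 2 = ((r : ℤ) - lam) * ∑ x : Fin v, (z x) ^ 2 := by
    have e1 : ∑ j : Fin b, (t j) ^ 2 = ∑ x : Fin v, ∑ y : Fin v, (z x * z y) *
        ∑ j : Fin b, (if x ∈ B j then (1:ℤ) else 0) * (if y ∈ B j then (1:ℤ) else 0) := by
      calc ∑ j : Fin b, (t j) ^ 2
          = ∑ j : Fin b, ∑ x : Fin v, ∑ y : Fin v,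
            ((if x ∈ B j then (1:ℤ) else 0) * z x) * ((if y ∈ B j then (1:ℤ) else 0) * z y) := by
            refine Finset.sum_congr rfl fun j _ => ?_
            rw [sq, htfull j, Finset.sum_mul_sum]
        _ = _ := by
            rw [Finset.sum_comm]
            refine Finset.sum_congr rfl fun x _ => ?_
            rw [Finset.sum_comm]
            refine Finset.sum_congr rfl fun y _ => ?_
            rw [Finset.mul_sum]
            exact Finset.sum_congr rfl fun j _ => by ring
    have e2 : ∀ x y : Fin v, (z x * z y) *
        (∑ j : Fin b, (if x ∈ B j then (1:ℤ) else 0) * (if y ∈ B j then (1:ℤ) else 0))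
        = (lam : ℤ) * (z x * z y) + (if x = y then ((r:ℤ) - lam) * (z x * z y) else 0) := by
      intro x y
      rw [hcnt x y]
      split_ifs <;> ring
    have hpart1 : ∑ x : Fin v, ∑ y : Fin v, (lam:ℤ) * (z x * z y) = 0 := by
      have e3 : ∑ x : Fin v, ∑ y : Fin v, (lam:ℤ) * (z x * z y)
          = (lam:ℤ) * ((∑ x : Fin v, z x) * (∑ y : Fin v, z y)) := by
        rw [Finset.sum_mul_sum, Finset.mul_sum]
        exact Finset.sum_congr rfl fun x _ => by rw [Finset.mul_sum]
      rw [e3, hzsum]; ring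
    have hpart2 : ∑ x : Fin v, ∑ y : Fin v,
        (if x = y then ((r:ℤ)-lam) * (z x * z y) else 0) = ((r:ℤ)-lam) * ∑ x : Fin v, (z x)^2 := by
      rw [Finset.mul_sum]
      refine Finset.sum_congr rfl fun x _ => ?_
      rw [Finset.sum_ite_eq]
      simp [sq]
    rw [e1, Finset.sum_congr rfl (fun x _ => Finset.sum_congr rfl (fun y _ => e2 x y))]
    simp_rw [Finset.sum_add_distrib]
    rw [hpart1, hpart2, zero_add]
  -- total sum of t is zero
  have htot : ∑ j : Fin b, t j = 0 := by
    calc ∑ j : Fin b, t j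
        = ∑ j : Fin b, ∑ x : Fin v, (if x ∈ B j then (1:ℤ) else 0) * z x :=
          Finset.sum_congr rfl fun j _ => htfull j
      _ = ∑ x : Fin v, ∑ j : Fin b, (if x ∈ B j then (1:ℤ) else 0) * z x := Finset.sum_comm
      _ = ∑ x : Fin v, (r:ℤ) * z x := by
          refine Finset.sum_congr rfl fun x _ => ?_
          rw [← Finset.sum_mul, hcnt1 x]
      _ = 0 := by rw [← Finset.mul_sum, hzsum, mul_zero]
  -- t on the repeated blocks
  have htS : ∀ j ∈ S, t j = (k:ℤ) * ((b:ℤ) - r) := by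
    intro j hj
    have hBj : B j = A := by rw [hA]; exact hident j hj i₀ hi₀
    rw [ht]
    dsimp only
    rw [hBj]
    have hzA : ∀ x ∈ A, z x = (b:ℤ) - r := by
      intro x hx
      rw [hz, hχ]
      dsimp only
      rw [if_pos hx]; ring
    rw [Finset.sum_congr rfl hzA, Finset.sum_const, hA, hcard i₀, nsmul_eq_mul]
  have hStS : ∑ j ∈ S, t j = (s:ℤ) * ((k:ℤ) * ((b:ℤ) - r)) := by
    rw [Finset.sum_congr rfl htS, Finset.sum_const, hS, nsmul_eq_mul]
  -- inner product of w and t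
  have hwt : ∑ j : Fin b, w j * t j = (b:ℤ) * ((s:ℤ) * ((k:ℤ) * ((b:ℤ) - r))) := by
    have hp : ∀ j, w j * t j = (b:ℤ) * (if j ∈ S then t j else 0) - (s:ℤ) * t j := by
      intro j; rw [hw]; dsimp only; split_ifs <;> ring
    rw [Finset.sum_congr rfl (fun j _ => hp j), Finset.sum_sub_distrib, ← Finset.mul_sum,
      ← Finset.mul_sum, htot, mul_zero, sub_zero, Finset.sum_ite_mem, Finset.univ_inter, hStS]
  -- norm of w
  have hw2 : ∑ j : Fin b, (w j)^2 = (s:ℤ) * b * ((b:ℤ) - s) := by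
    have hp : ∀ j, (w j)^2 = ((b:ℤ)^2 - 2*b*s) * (if j ∈ S then (1:ℤ) else 0) + (s:ℤ)^2 := by
      intro j; rw [hw]; dsimp only; split_ifs <;> ring
    rw [Finset.sum_congr rfl (fun j _ => hp j), Finset.sum_add_distrib, ← Finset.mul_sum,
      Finset.sum_ite_mem, Finset.univ_inter, Finset.sum_const, Finset.sum_const,
      Finset.card_univ, Fintype.card_fin, hS, nsmul_eq_mul, nsmul_eq_mul, mul_one]
    ring
  -- Cauchy-Schwarz
  have CS := Finset.sum_mul_sq_le_sq_mul_sq Finset.univ w t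
  rw [hwt, hw2, KI, hz2] at CS
  -- positivity facts
  have hbrZ : (0:ℤ) < (b:ℤ) - (r:ℤ) := by
    have : (r:ℤ) < (b:ℤ) := by exact_mod_cast hrb'
    linarith
  have hs1Z : (0:ℤ) < (s:ℤ) := by exact_mod_cast hs0
  have hk1Z : (0:ℤ) < (k:ℤ) := by exact_mod_cast hk1
  have hbZ : (0:ℤ) < (b:ℤ) := by exact_mod_cast (show 0 < b by omega)
  have hrlZ : (lam:ℤ) < (r:ℤ) := by exact_mod_cast hrl
  -- the key inequality: s*k*(b-r) ≤ (r-lam)*(b-s)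
  have key : (s:ℤ) * k * ((b:ℤ)-r) ≤ ((r:ℤ)-lam) * ((b:ℤ)-s) := by
    have hc : (0:ℤ) < (b:ℤ)^2 * s * k * ((b:ℤ)-r) :=
      mul_pos (mul_pos (mul_pos (pow_pos hbZ 2) hs1Z) hk1Z) hbrZ
    refine le_of_mul_le_mul_left ?_ hc
    calc (b:ℤ)^2*s*k*((b:ℤ)-r) * ((s:ℤ)*k*((b:ℤ)-r))
        = ((b:ℤ)*((s:ℤ)*((k:ℤ)*((b:ℤ)-r))))^2 := by ring
      _ ≤ ((s:ℤ)*b*((b:ℤ)-s)) * (((r:ℤ)-lam) * ((k:ℤ)*b*((b:ℤ)-r))) := CS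
      _ = (b:ℤ)^2*s*k*((b:ℤ)-r) * (((r:ℤ)-lam)*((b:ℤ)-s)) := by ring
  have hid : ((v:ℤ)-1) * ((r:ℤ)-lam) = (k:ℤ)*((b:ℤ)-r) := by linear_combination hlamZ - hbkZ
  have hfin : ((r:ℤ)-lam) * ((s:ℤ)*v) ≤ ((r:ℤ)-lam) * b := by
    have e : ((r:ℤ)-lam) * ((s:ℤ)*v)
        = (s:ℤ) * (((v:ℤ)-1) * ((r:ℤ)-lam)) + (s:ℤ)*((r:ℤ)-lam) := by ring
    rw [e, hid]
    calc (s:ℤ) * ((k:ℤ)*((b:ℤ)-r)) + (s:ℤ)*((r:ℤ)-lam)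
        = (s:ℤ)*k*((b:ℤ)-r) + (s:ℤ)*((r:ℤ)-lam) := by ring
      _ ≤ ((r:ℤ)-lam)*((b:ℤ)-s) + (s:ℤ)*((r:ℤ)-lam) := by linarith [key]
      _ = ((r:ℤ)-lam) * b := by ring
  have hfinal : (s:ℤ) * v ≤ (b:ℤ) := le_of_mul_le_mul_left hfin (by linarith)
  exact_mod_cast hfinal
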